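/- Let p and q be positive integers, let c₁,…,c_p be integers with 0 ≤ c_j ≤ q for all j, let N = c₁ + c₂ + ⋯ + c_p, and let m and M be integers with 0 ≤ m, M ≤ p and mq ≤ N ≤ Mq. Then there exists a (0,1)-matrix with q rows and p columns such that for every j ∈ {1,…,p} the j-th column contains exactly c_j ones, and for every i ∈ {1,…,q} the i-th row contains at least m and at most M ones. -/

import Mathlib

open Finset

private lemma mod_injOn_Ico (a c q : ℕ) (hc : c ≤ q) :
    Set.InjOn (· % q) (Finset.Ico a (a + c) : Finset ℕ) := by
  intro x hx y hy hxy
  simp only [coe_Ico, Set.mem_Ico] at hx hy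
  rcases lt_trichotomy x y with h | h | h
  · exfalso
    have hd : q ∣ y - x := (Nat.modEq_iff_dvd' h.le).mp hxy
    have := Nat.le_of_dvd (by omega) hd
    omega
  · exact h
  · exfalso
    have hd : q ∣ x - y := (Nat.modEq_iff_dvd' h.le).mp hxy.symm
    have := Nat.le_of_dvd (by omega) hd
    omega

private lemma sum_card_filter_Ico (S : ℕ → ℕ) (hS0 : S 0 = 0)
    (hmono : ∀ n, S n ≤ S (n + 1)) (P : ℕ → Prop) [DecidablePred P] :
    ∀ n, ∑ k ∈ Finset.range n, ((Finset.Ico (S k) (S (k + 1))).filter P).card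
      = ((Finset.range (S n)).filter P).card := by
  intro n
  induction n with
  | zero => simp [hS0]
  | succ n ih =>
      rw [Finset.sum_range_succ, ih]
      have hU : Finset.range (S (n + 1))
          = Finset.range (S n) ∪ Finset.Ico (S n) (S (n + 1)) := by
        rw [Finset.range_eq_Ico, Finset.range_eq_Ico]
        exact (Finset.Ico_union_Ico_eq_Ico (Nat.zero_le _) (hmono n)).symm
      rw [hU, Finset.filter_union, Finset.card_union_of_disjoint]
      exact Finset.disjoint_filter_filter
        (by rw [Finset.range_eq_Ico]; exact Finset.Ico_disjoint_Ico_consecutive 0 (S n) (S (n+1)))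



/-- Lemma 1.5: Let p, q be positive integers, let c₁,…,c_p be integers
with 0 ≤ c_j ≤ q, let N = c₁ + ⋯ + c_p, and let m, M be integers with 0 ≤ m, M ≤ p and
mq ≤ N ≤ Mq.  Then there is a (0,1)-matrix with q rows and p columns whose j-th column
contains exactly c_j ones and whose every row contains at least m and at most M ones. -/
theorem lemma_one_five
    (p q : ℕ) (hp : 0 < p) (hq : 0 < q)
    (c : Fin p → ℕ) (hc : ∀ j : Fin p, c j ≤ q)
    (m M : ℕ) (hm : m ≤ p) (hM : M ≤ p)
    (hlow : m * q ≤ ∑ j : Fin p, c j) (hhigh : ∑ j : Fin p, c j ≤ M * q) :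
    ∃ T : Fin q → Fin p → Bool,
      (∀ j : Fin p, (Finset.univ.filter (fun i : Fin q => T i j = true)).card = c j) ∧
      (∀ i : Fin q,
        m ≤ (Finset.univ.filter (fun j : Fin p => T i j = true)).card ∧
        (Finset.univ.filter (fun j : Fin p => T i j = true)).card ≤ M) := by
  classical
  set N : ℕ := ∑ j : Fin p, c j with hN
  set c' : ℕ → ℕ := fun k => if h : k < p then c ⟨k, h⟩ else 0 with hc'
  set S : ℕ → ℕ := fun n => ∑ k ∈ Finset.range n, c' k with hS
  have hc'val : ∀ j : Fin p, c' j.val = c j := by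
    intro j; simp [hc', j.isLt]
  have hSsucc : ∀ j : Fin p, S (j.val + 1) = S j.val + c j := by
    intro j
    rw [hS]
    simp only
    rw [Finset.sum_range_succ, hc'val]
  have hSp : S p = N := by
    rw [hS, hN]
    simp only
    rw [← Fin.sum_univ_eq_sum_range]
    exact Finset.sum_congr rfl (fun j _ => hc'val j)
  have hmono : ∀ n, S n ≤ S (n + 1) := by
    intro n; rw [hS]; simp only
    rw [Finset.sum_range_succ]; omega
  refine ⟨fun i j => decide (∃ k ∈ Finset.Ico (S j.val) (S j.val + c j), k % q = i.val),
    ?_, ?_⟩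
  · -- columns
    intro j
    have himg : Finset.univ.filter
        (fun i : Fin q =>
          (decide (∃ k ∈ Finset.Ico (S j.val) (S j.val + c j), k % q = i.val)) = true)
        = (Finset.Ico (S j.val) (S j.val + c j)).image
            (fun k => (⟨k % q, Nat.mod_lt k hq⟩ : Fin q)) := by
      ext i
      simp [Fin.ext_iff, eq_comm]
    rw [himg, Finset.card_image_of_injOn, Nat.card_Ico]
    · omega
    · intro x hx y hy hxy
      exact mod_injOn_Ico (S j.val) (c j) q (hc j) hx hy (by
        simpa [Fin.ext_iff] using hxy)
  · -- rows
    intro i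
    have hle1 : ∀ j : Fin p,
        ((Finset.Ico (S j.val) (S j.val + c j)).filter (fun k => k % q = i.val)).card ≤ 1 := by
      intro j
      refine Finset.card_le_one.mpr ?_
      intro x hx y hy
      simp only [Finset.mem_filter] at hx hy
      exact mod_injOn_Ico (S j.val) (c j) q (hc j) (by simpa using hx.1)
        (by simpa using hy.1) (by dsimp only; rw [hx.2, hy.2])
    have hcard : (Finset.univ.filter
        (fun j : Fin p =>
          (decide (∃ k ∈ Finset.Ico (S j.val) (S j.val + c j), k % q = i.val)) = true)).card
        = ((Finset.range N).filter (fun k => k % q = i.val)).card := by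
      rw [Finset.card_filter]
      have : ∀ j : Fin p,
          (if (decide (∃ k ∈ Finset.Ico (S j.val) (S j.val + c j), k % q = i.val)) = true
            then 1 else 0)
          = ((Finset.Ico (S j.val) (S (j.val + 1))).filter (fun k => k % q = i.val)).card := by
        intro j
        rw [hSsucc j]
        by_cases h : ∃ k ∈ Finset.Ico (S j.val) (S j.val + c j), k % q = i.val
        · obtain ⟨k, hk1, hk2⟩ := id h
          have hne : ((Finset.Ico (S j.val) (S j.val + c j)).filter
              (fun k => k % q = i.val)).Nonempty := ⟨k, Finset.mem_filter.mpr ⟨hk1, hk2⟩⟩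
          have h1 := Finset.card_pos.mpr hne
          have h2 := hle1 j
          rw [if_pos (decide_eq_true h)]
          omega
        · simp only [h]
          simp only [decide_false, Bool.false_eq_true, if_false]
          symm
          rw [Finset.card_eq_zero, Finset.filter_eq_empty_iff]
          intro x hx hx2
          exact h ⟨x, hx, hx2⟩
      rw [Finset.sum_congr rfl (fun j _ => this j), Fin.sum_univ_eq_sum_range
        (fun k => ((Finset.Ico (S k) (S (k + 1))).filter (fun x => x % q = i.val)).card) p]
      rw [sum_card_filter_Ico S (by simp [hS]) hmono _ p, hSp]
    rw [hcard]
    constructor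
    · -- lower bound
      refine le_trans (le_of_eq (Finset.card_range m).symm)
        (Finset.card_le_card_of_injOn (fun t => i.val + t * q) ?_ ?_)
      · intro t ht
        simp only [Finset.mem_coe, Finset.mem_range] at ht
        simp only [Finset.mem_coe, Finset.mem_filter, Finset.mem_range]
        constructor
        · have h1 : (t + 1) * q ≤ m * q := Nat.mul_le_mul_right q (by omega)
          have h2 : i.val < q := i.isLt
          have : i.val + t * q < (t + 1) * q := by
            rw [Nat.succ_mul]; omega
          omega
        · rw [Nat.add_mul_mod_self_right, Nat.mod_eq_of_lt i.isLt]
      · intro x _ y _ hxy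
        dsimp only at hxy
        have : x * q = y * q := by omega
        exact Nat.eq_of_mul_eq_mul_right hq this
    · -- upper bound
      calc ((Finset.range N).filter (fun k => k % q = i.val)).card
          ≤ ((Finset.range M).image (fun t => i.val + t * q)).card := by
            refine Finset.card_le_card ?_
            intro k hk
            simp only [Finset.mem_filter, Finset.mem_range] at hk
            simp only [Finset.mem_image, Finset.mem_range]
            refine ⟨k / q, ?_, ?_⟩
            · rw [Nat.div_lt_iff_lt_mul hq]
              omega
            · have := Nat.mod_add_div' k q
              omega
        _ ≤ M := le_trans Finset.card_image_le (le_of_eq (Finset.card_range M))
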